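/- Let μ be a Borel probability measure with compact support contained in M^{2×2}_+. Then the support of the dual measure μ̃ equals Ψ(supp μ), and the double dual of μ equals μ: (μ̃)˜ = μ. -/

import Mathlib

open MeasureTheory

noncomputable section

instance matrixMeasurableSpace {m n : ℕ} : MeasurableSpace (Matrix (Fin m) (Fin n) ℝ) :=
  show MeasurableSpace (Fin m → Fin n → ℝ) from inferInstance

/-- The Jacobian matrix of `φ : ℝⁿ → ℝᵐ` at `x`. -/
def jacobianM (m n : ℕ) (φ : (Fin n → ℝ) → (Fin m → ℝ)) (x : Fin n → ℝ) :
    Matrix (Fin m) (Fin n) ℝ :=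
  Matrix.of fun i j => fderiv ℝ φ x (Pi.single j 1) i

/-- `f : ℝ^{m×n} → ℝ` is quasiconvex: `f` is Borel measurable, locally bounded, and for every
nonempty bounded open `Ω ⊆ ℝⁿ`, every `X₀` and every smooth `φ` compactly supported in `Ω`,
`f X₀ * |Ω| ≤ ∫_Ω f (X₀ + Dφ x) dx`. -/
def IsQuasiconvex {m n : ℕ} (f : Matrix (Fin m) (Fin n) ℝ → ℝ) : Prop :=
  Measurable f ∧
  (∀ K : Set (Matrix (Fin m) (Fin n) ℝ), IsCompact K → ∃ C : ℝ, ∀ X ∈ K, |f X| ≤ C) ∧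
  ∀ Ω : Set (Fin n → ℝ), IsOpen Ω → Ω.Nonempty → Bornology.IsBounded Ω →
    ∀ (X₀ : Matrix (Fin m) (Fin n) ℝ) (φ : (Fin n → ℝ) → (Fin m → ℝ)),
      ContDiff ℝ (⊤ : ℕ∞) φ → HasCompactSupport φ → tsupport φ ⊆ Ω →
      f X₀ * (volume Ω).toReal ≤ ∫ x in Ω, f (X₀ + jacobianM m n φ x)

/-- `f : ℝ^{m×n} → ℝ` is rank-one convex. -/
def IsRankOneConvex {m n : ℕ} (f : Matrix (Fin m) (Fin n) ℝ → ℝ) : Prop :=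
  ∀ X Y : Matrix (Fin m) (Fin n) ℝ, (X - Y).rank ≤ 1 →
    ∀ t : ℝ, t ∈ Set.Icc (0 : ℝ) 1 →
      f (t • X + (1 - t) • Y) ≤ t * f X + (1 - t) * f Y

/-- The barycentre `μ̄ = ∫ X dμ(X)`, computed entrywise. -/
def matBarycenter {m n : ℕ} (μ : Measure (Matrix (Fin m) (Fin n) ℝ)) :
    Matrix (Fin m) (Fin n) ℝ :=
  Matrix.of fun i j => ∫ X, X i j ∂μ

/-- `M^{2×n}_tri`: second row is `(0, …, 0, a)`. -/
def Mtri (n : ℕ) : Set (Matrix (Fin 2) (Fin n) ℝ) :=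
  {X | ∀ j : Fin n, (j : ℕ) + 1 < n → X 1 j = 0}

/-- `M^{2×n}_diag`: first row `(a₁, …, a_{n-1}, 0)`, second row `(0, …, 0, b)`. -/
def Mdiag (n : ℕ) : Set (Matrix (Fin 2) (Fin n) ℝ) :=
  {X | (∀ j : Fin n, (j : ℕ) + 1 < n → X 1 j = 0) ∧
       (∀ j : Fin n, (j : ℕ) + 1 = n → X 0 j = 0)}

/-- The orthogonal projection of `ℝ^{2×n}` onto `M^{2×n}_diag`. -/
def Pdiag (n : ℕ) (X : Matrix (Fin 2) (Fin n) ℝ) : Matrix (Fin 2) (Fin n) ℝ :=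
  Matrix.of fun i j =>
    if i = 0 then (if (j : ℕ) + 1 < n then X 0 j else 0)
    else (if (j : ℕ) + 1 = n then X 1 j else 0)

/-- A homogeneous gradient Young measure: a compactly supported Borel probability measure
satisfying Jensen's inequality for all quasiconvex functions. -/
def IsHomogeneousGradientYoungMeasure {m n : ℕ}
    (μ : Measure (Matrix (Fin m) (Fin n) ℝ)) : Prop :=
  IsProbabilityMeasure μ ∧ (∃ K, IsCompact K ∧ μ Kᶜ = 0) ∧
  ∀ f : Matrix (Fin m) (Fin n) ℝ → ℝ, IsQuasiconvex f →
    f (matBarycenter μ) ≤ ∫ X, f X ∂μ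

/-- A laminate: a compactly supported Borel probability measure
satisfying Jensen's inequality for all rank-one convex functions. -/
def IsLaminate {m n : ℕ} (μ : Measure (Matrix (Fin m) (Fin n) ℝ)) : Prop :=
  IsProbabilityMeasure μ ∧ (∃ K, IsCompact K ∧ μ Kᶜ = 0) ∧
  ∀ f : Matrix (Fin m) (Fin n) ℝ → ℝ, IsRankOneConvex f →
    f (matBarycenter μ) ≤ ∫ X, f X ∂μ

/-- `M^{2×2}_+ = {X : X₁₂ > 0}`. -/
def Mplus : Set (Matrix (Fin 2) (Fin 2) ℝ) := {X | 0 < X 0 1}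

/-- The partial Legendre transform `Ψ`. -/
def Psi (X : Matrix (Fin 2) (Fin 2) ℝ) : Matrix (Fin 2) (Fin 2) ℝ :=
  (X 0 1)⁻¹ • !![-(X 0 0), 1; -X.det, X 1 1]

/-- The dual function `h̃(X) = X₁₂ · h(Ψ(X))`. -/
def dualFn (h : Matrix (Fin 2) (Fin 2) ℝ → ℝ) (X : Matrix (Fin 2) (Fin 2) ℝ) : ℝ :=
  X 0 1 * h (Psi X)

/-- The dual measure `μ̃`, characterised by
`∫ f dμ̃ = (1/μ̄₁₂) ∫ X₁₂ · f(Ψ(X)) dμ(X)` for all Borel `f : M → [0,∞]`. -/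
def dualMeasure (μ : Measure (Matrix (Fin 2) (Fin 2) ℝ)) :
    Measure (Matrix (Fin 2) (Fin 2) ℝ) :=
  Measure.map Psi
    ((ENNReal.ofReal (matBarycenter μ 0 1))⁻¹ •
      μ.withDensity fun X => ENNReal.ofReal (X 0 1))

/-- The (topological) support of a measure. -/
def mSupport {α : Type*} [TopologicalSpace α] [MeasurableSpace α] (μ : Measure α) : Set α :=
  {x | ∀ U : Set α, IsOpen U → x ∈ U → μ U ≠ 0}

/-- `f` is quasiconvex on the open set `U ⊆ ℝ^{2×2}`. -/
def IsQuasiconvexOn (U : Set (Matrix (Fin 2) (Fin 2) ℝ))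
    (f : Matrix (Fin 2) (Fin 2) ℝ → ℝ) : Prop :=
  ∀ Ω : Set (Fin 2 → ℝ), IsOpen Ω → Ω.Nonempty → Bornology.IsBounded Ω →
    ∀ (A : Matrix (Fin 2) (Fin 2) ℝ) (φ : (Fin 2 → ℝ) → (Fin 2 → ℝ)),
      ContDiff ℝ (⊤ : ℕ∞) φ → HasCompactSupport φ → tsupport φ ⊆ Ω →
      (∀ x, A + jacobianM 2 2 φ x ∈ U) →
      f A * (volume Ω).toReal ≤ ∫ x in Ω, f (A + jacobianM 2 2 φ x)

/-- `f` is rank-one convex on the open convex set `U ⊆ ℝ^{2×2}`. -/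
def IsRankOneConvexOn (U : Set (Matrix (Fin 2) (Fin 2) ℝ))
    (f : Matrix (Fin 2) (Fin 2) ℝ → ℝ) : Prop :=
  ∀ X ∈ U, ∀ Y ∈ U, (X - Y).rank ≤ 1 →
    ∀ t : ℝ, t ∈ Set.Icc (0 : ℝ) 1 →
      f (t • X + (1 - t) • Y) ≤ t * f X + (1 - t) * f Y


/-! ### Auxiliary lemmas -/

open scoped ENNReal NNReal

instance matrixBorelSpace : BorelSpace (Matrix (Fin 2) (Fin 2) ℝ) :=
  show BorelSpace (Fin 2 → Fin 2 → ℝ) from Pi.borelSpace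

lemma entry_meas (a b : Fin 2) : Measurable fun X : Matrix (Fin 2) (Fin 2) ℝ => X a b :=
  (measurable_pi_apply b).comp (measurable_pi_apply a)

lemma entry_cont (a b : Fin 2) : Continuous fun X : Matrix (Fin 2) (Fin 2) ℝ => X a b :=
  (continuous_apply b).comp (continuous_apply a)

lemma isOpen_Mplus : IsOpen Mplus := isOpen_lt continuous_const (entry_cont 0 1)

lemma Psi01 (X : Matrix (Fin 2) (Fin 2) ℝ) : Psi X 0 1 = (X 0 1)⁻¹ := by
  simp [Psi]

lemma Psi_mem {X : Matrix (Fin 2) (Fin 2) ℝ} (hX : X ∈ Mplus) : Psi X ∈ Mplus := by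
  have : (0:ℝ) < X 0 1 := hX
  simpa [Mplus, Psi01] using inv_pos.mpr this

lemma Psi_Psi {X : Matrix (Fin 2) (Fin 2) ℝ} (hX : X ∈ Mplus) : Psi (Psi X) = X := by
  have h : X 0 1 ≠ 0 := ne_of_gt hX
  ext i j
  set_option linter.unnecessarySeqFocus false in
  fin_cases i <;> fin_cases j <;>
    simp [Psi, Matrix.det_fin_two, Matrix.smul_apply] <;> field_simp <;> ring

lemma measurable_Psi : Measurable Psi := by
  apply measurable_pi_lambda
  intro i
  apply measurable_pi_lambda
  intro j
  have h := entry_meas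
  fin_cases i <;> fin_cases j <;> simp [Psi, Matrix.det_fin_two, Matrix.smul_apply]
  · exact ((h 0 1).inv).mul (h 0 0)
  · exact h 0 1
  · exact ((h 0 1).inv).mul (((h 0 1).mul (h 1 0)).sub ((h 0 0).mul (h 1 1)))
  · exact ((h 0 1).inv).mul (h 1 1)

lemma continuousOn_Psi : ContinuousOn Psi Mplus := by
  have c := entry_cont
  have hinv : ContinuousOn (fun X : Matrix (Fin 2) (Fin 2) ℝ => (X 0 1)⁻¹) Mplus :=
    (c 0 1).continuousOn.inv₀ fun X hX => ne_of_gt (show (0:ℝ) < X 0 1 from hX)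
  apply continuousOn_pi.mpr
  intro i
  apply continuousOn_pi.mpr
  intro j
  fin_cases i <;> fin_cases j <;> simp [Psi, Matrix.det_fin_two, Matrix.smul_apply]
  · exact (hinv.mul (c 0 0).continuousOn).neg
  · exact hinv
  · exact hinv.mul ((((c 0 1).mul (c 1 0)).sub ((c 0 0).mul (c 1 1))).continuousOn)
  · exact hinv.mul (c 1 1).continuousOn

lemma map_withDensity_aux {α β : Type*} [MeasurableSpace α] [MeasurableSpace β]
    (μ : Measure α) {f : α → β} (hf : Measurable f) {g : β → ℝ≥0∞} (hg : Measurable g) :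
    (Measure.map f μ).withDensity g = Measure.map f (μ.withDensity (g ∘ f)) := by
  ext s hs
  rw [withDensity_apply _ hs, Measure.map_apply hf hs,
    withDensity_apply _ (hf hs), setLIntegral_map hs hg hf]
  rfl

/-- If the complement of a closed set is null, the support lies in the set. -/
lemma mSupport_subset {τ : Measure (Matrix (Fin 2) (Fin 2) ℝ)}
    {K : Set (Matrix (Fin 2) (Fin 2) ℝ)} (hK : IsClosed K) (h0 : τ Kᶜ = 0) :
    mSupport τ ⊆ K := by
  intro x hx
  by_contra hxK
  exact hx Kᶜ hK.isOpen_compl hxK h0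

/-- For a compactly supported probability measure on `M^{2×2}_+`, the support of the dual
measure is `Ψ(supp μ)` and the double dual of `μ` is `μ`. -/
theorem dualMeasure_support_and_involution
    (μ : Measure (Matrix (Fin 2) (Fin 2) ℝ))
    (hprob : IsProbabilityMeasure μ)
    (hsupp : ∃ K : Set (Matrix (Fin 2) (Fin 2) ℝ), IsCompact K ∧ K ⊆ Mplus ∧ μ Kᶜ = 0) :
    mSupport (dualMeasure μ) = Psi '' mSupport μ ∧ dualMeasure (dualMeasure μ) = μ := by
  classical
  obtain ⟨K, hK, hKM, hK0⟩ := hsupp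
  have hKclosed : IsClosed K := hK.isClosed
  have hKmeas : MeasurableSet K := hKclosed.measurableSet
  have haeK : ∀ᵐ X ∂μ, X ∈ K := by
    rw [MeasureTheory.ae_iff]
    simpa [Set.compl_def] using hK0
  have hKne : K.Nonempty := by
    by_contra hne
    rw [Set.not_nonempty_iff_eq_empty] at hne
    have : μ Set.univ = 0 := by simpa [hne] using hK0
    simp [measure_univ] at this
  obtain ⟨Xm, hXm, hmin⟩ := hK.exists_isMinOn hKne (entry_cont 0 1).continuousOn
  obtain ⟨XM, hXM, hmax⟩ := hK.exists_isMaxOn hKne (entry_cont 0 1).continuousOn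
  have hm0 : (0:ℝ) < Xm 0 1 := hKM hXm
  have hint : Integrable (fun X : Matrix (Fin 2) (Fin 2) ℝ => X 0 1) μ := by
    refine (integrable_const (XM 0 1)).mono' (entry_meas 0 1).aestronglyMeasurable ?_
    filter_upwards [haeK] with X hX
    rw [Real.norm_eq_abs, abs_of_pos (hKM hX)]
    exact hmax hX
  set c : ℝ := matBarycenter μ 0 1 with hcdef
  have hcI : c = ∫ X, X 0 1 ∂μ := rfl
  have hc : 0 < c := by
    have h1 : ∫ X, (Xm 0 1 : ℝ) ∂μ ≤ ∫ X, X 0 1 ∂μ := by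
      refine integral_mono_ae (integrable_const _) hint ?_
      filter_upwards [haeK] with X hX
      exact hmin hX
    have h2 : ∫ X, (Xm 0 1 : ℝ) ∂μ = Xm 0 1 := by
      simp [measure_univ]
    rw [hcI]; linarith
  have hcne : ENNReal.ofReal c ≠ 0 := by
    simp [ENNReal.ofReal_eq_zero, not_le, hc]
  have hcnetop : ENNReal.ofReal c ≠ ⊤ := ENNReal.ofReal_ne_top
  set h : Matrix (Fin 2) (Fin 2) ℝ → ℝ≥0∞ := fun X => ENNReal.ofReal (X 0 1) with hhdef
  have hmeas_h : Measurable h := (entry_meas 0 1).ennreal_ofReal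
  set σ : Measure (Matrix (Fin 2) (Fin 2) ℝ) :=
    (ENNReal.ofReal c)⁻¹ • μ.withDensity h with hσdef
  have hν : dualMeasure μ = Measure.map Psi σ := rfl
  have hσK : σ Kᶜ = 0 := by
    rw [hσdef, Measure.smul_apply, withDensity_apply _ hKmeas.compl,
      setLIntegral_measure_zero _ _ hK0, smul_zero]
  -- σ and μ vanish on the same measurable sets
  have hσμ : ∀ U : Set (Matrix (Fin 2) (Fin 2) ℝ), MeasurableSet U → (σ U = 0 ↔ μ U = 0) := by
    intro U hU
    rw [hσdef, Measure.smul_apply, smul_eq_mul, mul_eq_zero,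
      withDensity_apply _ hU]
    have hinvne : (ENNReal.ofReal c)⁻¹ ≠ 0 := ENNReal.inv_ne_zero.mpr hcnetop
    constructor
    · rintro (hz | hz)
      · exact absurd hz hinvne
      · -- lintegral of h over U is zero forces μ U = 0
        have hUK : μ (U ∩ K) = 0 := by
          by_contra hne
          have hge : ENNReal.ofReal (Xm 0 1) * μ (U ∩ K) ≤ ∫⁻ X in U ∩ K, h X ∂μ := by
            rw [← setLIntegral_const (U ∩ K) (ENNReal.ofReal (Xm 0 1))]
            refine setLIntegral_mono' (hU.inter hKmeas) ?_
            intro X hX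
            exact ENNReal.ofReal_le_ofReal (hmin hX.2)
          have hle : ∫⁻ X in U ∩ K, h X ∂μ ≤ ∫⁻ X in U, h X ∂μ :=
            lintegral_mono_set Set.inter_subset_left
          have : ENNReal.ofReal (Xm 0 1) * μ (U ∩ K) = 0 :=
            le_antisymm (le_trans hge (le_trans hle (le_of_eq hz))) zero_le
          rw [mul_eq_zero] at this
          rcases this with h' | h'
          · simp [ENNReal.ofReal_eq_zero, not_le.mpr hm0] at h'
          · exact hne h'
        refine le_antisymm ?_ zero_le
        calc μ U ≤ μ ((U ∩ K) ∪ Kᶜ) := measure_mono (by intro x hx; by_cases hxK : x ∈ K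
                                                        · exact Or.inl ⟨hx, hxK⟩
                                                        · exact Or.inr hxK)
          _ ≤ μ (U ∩ K) + μ Kᶜ := measure_union_le _ _
          _ = 0 := by rw [hUK, hK0, add_zero]
    · intro hz
      exact Or.inr (setLIntegral_measure_zero _ _ hz)
  have hsuppσ : mSupport σ = mSupport μ := by
    ext x
    constructor <;> intro hx U hU hxU <;> intro hz
    · exact hx U hU hxU ((hσμ U hU.measurableSet).mpr hz)
    · exact hx U hU hxU ((hσμ U hU.measurableSet).mp hz)
  have hsuppμK : mSupport μ ⊆ K := mSupport_subset hKclosed hK0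
  -- map formula for ν on measurable sets
  have hmap : ∀ U : Set (Matrix (Fin 2) (Fin 2) ℝ), MeasurableSet U →
      dualMeasure μ U = σ (Psi ⁻¹' U) := by
    intro U hU
    rw [hν, Measure.map_apply measurable_Psi hU]
  -- Support statement
  have hsupport : mSupport (dualMeasure μ) = Psi '' mSupport μ := by
    apply Set.Subset.antisymm
    · -- reverse inclusion: supp ν ⊆ Psi '' supp μ
      intro x hx
      -- first, x ∈ Psi '' K
      have hPsiK : IsCompact (Psi '' K) := hK.image_of_continuousOn (continuousOn_Psi.mono hKM)
      have hxPsiK : x ∈ Psi '' K := by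
        by_contra hxn
        refine hx (Psi '' K)ᶜ hPsiK.isClosed.isOpen_compl hxn ?_
        rw [hmap _ hPsiK.isClosed.measurableSet.compl]
        refine le_antisymm (le_trans (measure_mono ?_) (le_of_eq hσK)) zero_le
        intro z hz
        intro hzK
        exact hz (Set.mem_image_of_mem Psi hzK)
      obtain ⟨y, hyK, rfl⟩ := hxPsiK
      have hyM : y ∈ Mplus := hKM hyK
      refine ⟨y, ?_, rfl⟩
      intro U hU hyU
      have hW : IsOpen (Mplus ∩ Psi ⁻¹' U) :=
        continuousOn_Psi.isOpen_inter_preimage isOpen_Mplus hU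
      have hxW : Psi y ∈ Mplus ∩ Psi ⁻¹' U := by
        refine ⟨Psi_mem hyM, ?_⟩
        show Psi (Psi y) ∈ U
        rw [Psi_Psi hyM]; exact hyU
      have hνW := hx _ hW hxW
      rw [hmap _ hW.measurableSet] at hνW
      intro hz
      apply hνW
      have hσU : σ U = 0 := (hσμ U hU.measurableSet).mpr hz
      refine le_antisymm ?_ zero_le
      have hsub : Psi ⁻¹' (Mplus ∩ Psi ⁻¹' U) ∩ K ⊆ U := by
        rintro z ⟨⟨hz1, hz2⟩, hzK⟩
        have : Psi (Psi z) ∈ U := hz2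
        rwa [Psi_Psi (hKM hzK)] at this
      calc σ (Psi ⁻¹' (Mplus ∩ Psi ⁻¹' U))
          ≤ σ ((Psi ⁻¹' (Mplus ∩ Psi ⁻¹' U) ∩ K) ∪ Kᶜ) := measure_mono (by
            intro z hz; by_cases hzK : z ∈ K
            · exact Or.inl ⟨hz, hzK⟩
            · exact Or.inr hzK)
        _ ≤ σ (Psi ⁻¹' (Mplus ∩ Psi ⁻¹' U) ∩ K) + σ Kᶜ := measure_union_le _ _
        _ ≤ σ U + 0 := add_le_add (measure_mono hsub) (le_of_eq hσK)
        _ = 0 := by rw [hσU, add_zero]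
    · -- forward inclusion
      rintro x ⟨y, hy, rfl⟩
      have hyK : y ∈ K := hsuppμK hy
      have hyM : y ∈ Mplus := hKM hyK
      intro U hU hxU
      have hW : IsOpen (Mplus ∩ Psi ⁻¹' U) :=
        continuousOn_Psi.isOpen_inter_preimage isOpen_Mplus hU
      have hyW : y ∈ Mplus ∩ Psi ⁻¹' U := ⟨hyM, hxU⟩
      have hμW : μ (Mplus ∩ Psi ⁻¹' U) ≠ 0 := hy _ hW hyW
      rw [hmap _ hU.measurableSet]
      intro hz
      apply hμW
      refine (hσμ _ hW.measurableSet).mp ?_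
      refine le_antisymm (le_trans (measure_mono Set.inter_subset_right) (le_of_eq hz)) zero_le
  refine ⟨hsupport, ?_⟩
  -- Double dual
  have hbarν : matBarycenter (dualMeasure μ) 0 1 = c⁻¹ := by
    have : matBarycenter (dualMeasure μ) 0 1 = ∫ Y, Y 0 1 ∂(Measure.map Psi σ) := by rw [hν]; rfl
    rw [this, integral_map measurable_Psi.aemeasurable (entry_meas 0 1).aestronglyMeasurable]
    rw [hσdef, integral_smul_measure]
    have hden : μ.withDensity h =
        μ.withDensity (fun X => ((X 0 1).toNNReal : ℝ≥0∞)) := rfl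
    rw [hden, integral_withDensity_eq_integral_smul (entry_meas 0 1).real_toNNReal]
    have hone : ∫ X, (X 0 1).toNNReal • Psi X 0 1 ∂μ = 1 := by
      have : ∀ᵐ X ∂μ, (X 0 1).toNNReal • Psi X 0 1 = 1 := by
        filter_upwards [haeK] with X hX
        have hXpos : (0:ℝ) < X 0 1 := hKM hX
        rw [Psi01, NNReal.smul_def, Real.coe_toNNReal _ hXpos.le, smul_eq_mul,
          mul_inv_cancel₀ (ne_of_gt hXpos)]
      rw [integral_congr_ae this]
      simp [measure_univ]
    rw [hone]
    rw [ENNReal.toReal_inv, ENNReal.toReal_ofReal hc.le]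
    simp
  show dualMeasure (dualMeasure μ) = μ
  have hstep : dualMeasure (dualMeasure μ) = Measure.map Psi
      ((ENNReal.ofReal (matBarycenter (dualMeasure μ) 0 1))⁻¹ •
        (dualMeasure μ).withDensity (fun X => ENNReal.ofReal (X 0 1))) := rfl
  rw [hstep, hbarν, hν]
  have hwd : (Measure.map Psi σ).withDensity (fun X => ENNReal.ofReal (X 0 1)) =
      Measure.map Psi (σ.withDensity (h ∘ Psi)) :=
    map_withDensity_aux σ measurable_Psi hmeas_h
  rw [hwd]
  have hσwd : σ.withDensity (h ∘ Psi) = (ENNReal.ofReal c)⁻¹ • μ := by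
    rw [hσdef, withDensity_smul_measure,
      ← withDensity_mul μ hmeas_h (hmeas_h.comp measurable_Psi)]
    congr 1
    have : (h * (h ∘ Psi)) =ᵐ[μ] 1 := by
      filter_upwards [haeK] with X hX
      have hXpos : (0:ℝ) < X 0 1 := hKM hX
      show h X * h (Psi X) = 1
      rw [hhdef]
      simp only [Psi01]
      rw [← ENNReal.ofReal_mul hXpos.le, mul_inv_cancel₀ (ne_of_gt hXpos)]
      simp
    rw [withDensity_congr_ae this, withDensity_one]
  rw [hσwd, Measure.map_smul, Measure.map_smul, Measure.map_smul, smul_smul,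
    ENNReal.ofReal_inv_of_pos hc, inv_inv,
    ENNReal.mul_inv_cancel hcne hcnetop, one_smul,
    Measure.map_map measurable_Psi measurable_Psi]
  have hid : (Psi ∘ Psi) =ᵐ[μ] id := by
    filter_upwards [haeK] with X hX
    exact Psi_Psi (hKM hX)
  rw [Measure.map_congr hid, Measure.map_id]

end
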